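/- With N the RR2 Abelian recursion with t ants and h(n,i) = t·(n choose ((i+n)/2))/2^n the binomial model, for every fixed site (n,i) with n ≡ i (mod 2) and |i| ≤ n: |N_t(n,i) - h_t(n,i)| ≤ n, where N_t denotes the recursion started with t ants. In particular N_t(n,i)/t → (n choose ((i+n)/2))/2^n as t → ∞. -/

import Mathlib

open Filter

namespace Stmt12

noncomputable def FF (a : ℤ) : ℤ := if a = 0 then 0 else ⌈((a : ℚ) - 1) / 2⌉
noncomputable def GG (b : ℤ) : ℤ := if b = 0 then 0 else ⌊((b : ℚ) - 1) / 2⌋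

lemma FF_nonneg {a : ℤ} (ha : 0 ≤ a) : 0 ≤ FF a := by
  unfold FF
  split_ifs with h
  · exact le_refl 0
  · have h1 : (1:ℤ) ≤ a := by omega
    have h2 : (0:ℚ) ≤ ((a:ℚ) - 1) / 2 := by
      have : (1:ℚ) ≤ (a:ℚ) := by exact_mod_cast h1
      linarith
    exact Int.ceil_nonneg h2

lemma GG_nonneg {b : ℤ} (hb : 0 ≤ b) : 0 ≤ GG b := by
  unfold GG
  split_ifs with h
  · exact le_refl 0
  · have h1 : (1:ℤ) ≤ b := by omega
    have h2 : (0:ℚ) ≤ ((b:ℚ) - 1) / 2 := by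
      have : (1:ℚ) ≤ (b:ℚ) := by exact_mod_cast h1
      linarith
    exact Int.floor_nonneg.mpr h2

lemma two_FF_le {a : ℤ} (ha : 0 ≤ a) : 2 * FF a ≤ a := by
  unfold FF
  split_ifs with h
  · omega
  · have h2 : (⌈((a:ℚ) - 1) / 2⌉ : ℚ) < ((a:ℚ) - 1) / 2 + 1 := Int.ceil_lt_add_one _
    have h3 : ((2 * ⌈((a:ℚ) - 1) / 2⌉ : ℤ) : ℚ) < (a : ℚ) + 1 := by push_cast; linarith
    have h4 : (2 * ⌈((a:ℚ) - 1) / 2⌉ : ℤ) < a + 1 := by exact_mod_cast h3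
    omega

lemma two_FF_ge {a : ℤ} (ha : 0 ≤ a) : a - 1 ≤ 2 * FF a := by
  unfold FF
  split_ifs with h
  · omega
  · have h2 : (((a:ℚ) - 1) / 2) ≤ (⌈((a:ℚ) - 1) / 2⌉ : ℚ) := Int.le_ceil _
    have h3 : ((a : ℚ)) - 1 ≤ ((2 * ⌈((a:ℚ) - 1) / 2⌉ : ℤ) : ℚ) := by push_cast; linarith
    have h4 : a - 1 ≤ (2 * ⌈((a:ℚ) - 1) / 2⌉ : ℤ) := by exact_mod_cast h3
    omega

lemma two_GG_le {b : ℤ} (hb : 0 ≤ b) : 2 * GG b ≤ b := by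
  unfold GG
  split_ifs with h
  · omega
  · have h2 : (⌊((b:ℚ) - 1) / 2⌋ : ℚ) ≤ ((b:ℚ) - 1) / 2 := Int.floor_le _
    have h3 : ((2 * ⌊((b:ℚ) - 1) / 2⌋ : ℤ) : ℚ) ≤ (b : ℚ) - 1 := by push_cast; linarith
    have h4 : (2 * ⌊((b:ℚ) - 1) / 2⌋ : ℤ) ≤ b - 1 := by exact_mod_cast h3
    omega

lemma two_GG_ge {b : ℤ} (hb : 0 ≤ b) : b - 2 ≤ 2 * GG b := by
  unfold GG
  split_ifs with h
  · omega
  · have h2 : (((b:ℚ) - 1) / 2) < (⌊((b:ℚ) - 1) / 2⌋ : ℚ) + 1 := Int.lt_floor_add_one _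
    have h3 : (b : ℚ) - 3 < ((2 * ⌊((b:ℚ) - 1) / 2⌋ : ℤ) : ℚ) := by push_cast; linarith
    have h4 : b - 3 < (2 * ⌊((b:ℚ) - 1) / 2⌋ : ℤ) := by exact_mod_cast h3
    omega

lemma FF_add_GG_ge {p : ℤ} (hp : 0 ≤ p) : p - 1 ≤ FF p + GG p := by
  unfold FF GG
  split_ifs with h
  · omega
  · have h2 : (((p:ℚ) - 1) / 2) ≤ (⌈((p:ℚ) - 1) / 2⌉ : ℚ) := Int.le_ceil _
    have h3 : (((p:ℚ) - 1) / 2) < (⌊((p:ℚ) - 1) / 2⌋ : ℚ) + 1 := Int.lt_floor_add_one _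
    have h4 : ((p:ℚ)) - 2 < ((⌈((p:ℚ) - 1) / 2⌉ + ⌊((p:ℚ) - 1) / 2⌋ : ℤ) : ℚ) := by
      push_cast; linarith
    have h5 : p - 2 < (⌈((p:ℚ) - 1) / 2⌉ + ⌊((p:ℚ) - 1) / 2⌋ : ℤ) := by exact_mod_cast h4
    omega

/-- Pascal-style binomial on ℤ sites. -/
def cc : ℕ → ℤ → ℤ
  | 0, i => if i = 0 then 1 else 0
  | (n+1), i => cc n (i - 1) + cc n (i + 1)

lemma cc_nonneg : ∀ (n : ℕ) (i : ℤ), 0 ≤ cc n i := by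
  intro n
  induction n with
  | zero => intro i; simp only [cc]; split_ifs <;> norm_num
  | succ n ih => intro i; simp only [cc]; have := ih (i-1); have := ih (i+1); omega

lemma cc_out : ∀ (n : ℕ) (i : ℤ), ((i : ℤ) < -(n:ℤ) ∨ (n:ℤ) < i) → cc n i = 0 := by
  intro n
  induction n with
  | zero => intro i hi; simp only [cc]; split_ifs with h <;> [omega; rfl]
  | succ n ih =>
    intro i hi
    simp only [cc]
    rw [ih (i-1) (by push_cast at hi ⊢; omega), ih (i+1) (by push_cast at hi ⊢; omega)]
    ring

lemma cc_par : ∀ (n : ℕ) (i : ℤ), (i + n) % 2 ≠ 0 → cc n i = 0 := by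
  intro n
  induction n with
  | zero => intro i hi; simp only [cc]; split_ifs with h <;> [omega; rfl]
  | succ n ih =>
    intro i hi
    simp only [cc]
    rw [ih (i-1) (by push_cast at hi ⊢; omega), ih (i+1) (by push_cast at hi ⊢; omega)]
    ring

lemma cc_sum : ∀ n : ℕ, (∑ j ∈ Finset.range (n+1), cc n (-(n:ℤ) + 2*j)) = 2^n := by
  intro n
  induction n with
  | zero => simp [cc]
  | succ n ih =>
    have key : ∀ j : ℕ, cc (n+1) (-((n:ℤ)+1) + 2*j) =
        cc n (-(n:ℤ) + 2*(j:ℤ) - 2) + cc n (-(n:ℤ) + 2*(j:ℤ)) := by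
      intro j; simp only [cc]; congr 2 <;> push_cast <;> ring
    calc (∑ j ∈ Finset.range (n+2), cc (n+1) (-((n+1:ℕ):ℤ) + 2*j))
        = (∑ j ∈ Finset.range (n+2), (cc n (-(n:ℤ) + 2*(j:ℤ) - 2) + cc n (-(n:ℤ) + 2*(j:ℤ)))) := by
          apply Finset.sum_congr rfl; intro j _; push_cast; exact key j
      _ = (∑ j ∈ Finset.range (n+2), cc n (-(n:ℤ) + 2*(j:ℤ) - 2))
          + (∑ j ∈ Finset.range (n+2), cc n (-(n:ℤ) + 2*(j:ℤ))) := Finset.sum_add_distrib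
      _ = 2^(n+1) := by
          rw [Finset.sum_range_succ' (fun j => cc n (-(n:ℤ) + 2*(j:ℤ) - 2)) (n+1)]
          rw [Finset.sum_range_succ (fun j => cc n (-(n:ℤ) + 2*(j:ℤ))) (n+1)]
          have e1 : cc n (-(n:ℤ) + 2*((0:ℕ):ℤ) - 2) = 0 := cc_out n _ (by push_cast; omega)
          have e2 : cc n (-(n:ℤ) + 2*(((n+1:ℕ)):ℤ)) = 0 := cc_out n _ (by push_cast; omega)
          have e3 : (∑ j ∈ Finset.range (n+1), cc n (-(n:ℤ) + 2*((j+1:ℕ):ℤ) - 2))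
              = ∑ j ∈ Finset.range (n+1), cc n (-(n:ℤ) + 2*(j:ℤ)) := by
            apply Finset.sum_congr rfl; intro j _; congr 1; push_cast; ring
          rw [e1, e2, e3, ih]; ring

lemma cc_eq_choose : ∀ (n : ℕ) (i : ℤ), -(n:ℤ) ≤ i → i ≤ n → (i + n) % 2 = 0 →
    cc n i = (n.choose ((i + n).toNat / 2) : ℤ) := by
  intro n
  induction n with
  | zero => intro i h1 h2 h3; simp only [cc]; split_ifs with h <;> simp_all <;> omega
  | succ n ih =>
    intro i h1 h2 h3
    push_cast at h1 h2 h3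
    simp only [cc]
    rcases eq_or_lt_of_le h1 with heq | hlt
    · -- i = -(n+1)
      have hi : i = -((n:ℤ)+1) := by omega
      rw [cc_out n (i-1) (by omega), ih (i+1) (by omega) (by omega) (by omega)]
      have : (i + 1 + (n:ℤ)).toNat = 0 := by omega
      rw [this]
      have : (i + ((n:ℕ)+1:ℤ)).toNat = 0 := by push_cast; omega
      have h4 : (i + ((n+1:ℕ):ℤ)).toNat = 0 := by push_cast; omega
      rw [h4]
      simp
    · rcases eq_or_lt_of_le h2 with heq2 | hlt2
      · -- i = n+1
        have hi : i = (n:ℤ)+1 := by omega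
        rw [cc_out n (i+1) (by omega), ih (i-1) (by omega) (by omega) (by omega)]
        have h4 : (i - 1 + (n:ℤ)).toNat = 2*n := by omega
        have h5 : (i + ((n+1:ℕ):ℤ)).toNat = 2*(n+1) := by push_cast; omega
        rw [h4, h5]
        have : (2*n)/2 = n := by omega
        rw [this]
        have : (2*(n+1))/2 = n+1 := by omega
        rw [this]
        rw [Nat.choose_self, Nat.choose_self]; ring
      · -- interior
        have ha := ih (i-1) (by omega) (by omega) (by omega)
        have hb := ih (i+1) (by omega) (by omega) (by omega)
        rw [ha, hb]
        have hm : 2 ≤ i + (n:ℤ) + 1 := by omega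
        set m : ℕ := (i + ((n+1:ℕ):ℤ)).toNat with hmdef
        have hm2 : (i + 1 + (n:ℤ)).toNat = m := by push_cast [hmdef]; omega
        have hm3 : (i - 1 + (n:ℤ)).toNat = m - 2 := by push_cast [hmdef]; omega
        have hmeven : m % 2 = 0 := by push_cast [hmdef] at *; omega
        have hmge : 2 ≤ m := by push_cast [hmdef] at *; omega
        rw [hm2, hm3]
        have h6 : m - 2 = 2 * (m/2 - 1) := by omega
        have h7 : m / 2 = (m/2 - 1) + 1 := by omega
        have h8 : (m-2)/2 = m/2 - 1 := by omega
        rw [h8]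
        have := Nat.choose_succ_succ n (m/2 - 1)
        rw [h7, this]
        push_cast
        ring
section Core

variable (M : ℕ → ℤ → ℤ) (t : ℤ)

/-- scaled error -/
noncomputable def eps (n : ℕ) (i : ℤ) : ℤ := 2^n * M n i - t * cc n i

/-- window sum -/
noncomputable def S (n : ℕ) (i : ℤ) (k : ℕ) : ℤ := ∑ j ∈ Finset.range k, eps M t n (i + 2*j)

def Gnum (n k : ℕ) : ℤ :=
  min (k:ℤ) ((n:ℤ)+1) * (min (k:ℤ) ((n:ℤ)+1) - 1) - 2 * min (k:ℤ) ((n:ℤ)+1) * n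

variable (ht : 0 ≤ t) (hM00 : M 0 0 = t) (hM0 : ∀ i : ℤ, i ≠ 0 → M 0 i = 0)
  (hMrec : ∀ (n : ℕ) (i : ℤ), M (n+1) i = FF (M n (i-1)) + GG (M n (i+1)))

include ht hM00 hM0 hMrec

lemma M_nonneg : ∀ (n : ℕ) (i : ℤ), 0 ≤ M n i := by
  intro n
  induction n with
  | zero =>
    intro i
    by_cases h : i = 0
    · rw [h, hM00]; exact ht
    · rw [hM0 i h]
  | succ n ih =>
    intro i
    rw [hMrec n i]
    have := FF_nonneg (ih (i-1))
    have := GG_nonneg (ih (i+1))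
    omega

lemma M_out : ∀ (n : ℕ) (i : ℤ), (i < -(n:ℤ) ∨ (n:ℤ) < i) → M n i = 0 := by
  intro n
  induction n with
  | zero => intro i hi; exact hM0 i (by omega)
  | succ n ih =>
    intro i hi
    rw [hMrec n i, ih (i-1) (by push_cast at hi ⊢; omega), ih (i+1) (by push_cast at hi ⊢; omega)]
    simp [FF, GG]

lemma M_par : ∀ (n : ℕ) (i : ℤ), (i + n) % 2 ≠ 0 → M n i = 0 := by
  intro n
  induction n with
  | zero => intro i hi; exact hM0 i (by omega)
  | succ n ih =>
    intro i hi
    rw [hMrec n i, ih (i-1) (by push_cast at hi ⊢; omega), ih (i+1) (by push_cast at hi ⊢; omega)]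
    simp [FF, GG]

lemma eps_vanish : ∀ (n : ℕ) (i : ℤ), ((i + n) % 2 ≠ 0 ∨ i < -(n:ℤ) ∨ (n:ℤ) < i) →
    eps M t n i = 0 := by
  intro n i hi
  unfold eps
  rcases hi with h | h
  · rw [M_par M t ht hM00 hM0 hMrec n i h, cc_par n i h]; ring
  · rw [M_out M t ht hM00 hM0 hMrec n i h, cc_out n i h]; ring

lemma eps_id (n : ℕ) (i : ℤ) : eps M t (n+1) i =
    eps M t n (i-1) + eps M t n (i+1)
      + 2^n * (2 * FF (M n (i-1)) - M n (i-1)) + 2^n * (2 * GG (M n (i+1)) - M n (i+1)) := by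
  unfold eps
  rw [hMrec n i]
  show 2^(n+1) * (FF (M n (i-1)) + GG (M n (i+1))) - t * (cc n (i-1) + cc n (i+1)) = _
  ring

lemma S_decomp (n : ℕ) (i : ℤ) (k : ℕ) :
    S M t (n+1) i (k+1) = S M t n (i-1) (k+2) + S M t n (i+1) k
      + 2^n * ((∑ j ∈ Finset.range (k+1), (2 * FF (M n ((i-1) + 2*j)) - M n ((i-1) + 2*j)))
             + (∑ j ∈ Finset.range (k+1), (2 * GG (M n ((i+1) + 2*j)) - M n ((i+1) + 2*j)))) := by
  have expand : S M t (n+1) i (k+1) =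
      (∑ j ∈ Finset.range (k+1), eps M t n ((i-1) + 2*(j:ℤ)))
      + (∑ j ∈ Finset.range (k+1), eps M t n ((i+1) + 2*(j:ℤ)))
      + 2^n * ((∑ j ∈ Finset.range (k+1), (2 * FF (M n ((i-1) + 2*j)) - M n ((i-1) + 2*j)))
             + (∑ j ∈ Finset.range (k+1), (2 * GG (M n ((i+1) + 2*j)) - M n ((i+1) + 2*j)))) := by
    unfold S
    rw [mul_add, Finset.mul_sum, Finset.mul_sum]
    rw [← Finset.sum_add_distrib, ← Finset.sum_add_distrib, ← Finset.sum_add_distrib]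
    apply Finset.sum_congr rfl
    intro j _
    have h1 : i + 2*(j:ℤ) - 1 = (i-1) + 2*(j:ℤ) := by ring
    have h2 : i + 2*(j:ℤ) + 1 = (i+1) + 2*(j:ℤ) := by ring
    have := eps_id M t ht hM00 hM0 hMrec n (i + 2*(j:ℤ))
    rw [h1, h2] at this
    rw [this]; ring
  rw [expand]
  have h3 : S M t n (i-1) (k+2) = (∑ j ∈ Finset.range (k+1), eps M t n ((i-1) + 2*(j:ℤ)))
      + eps M t n ((i-1) + 2*((k+1:ℕ):ℤ)) := by
    unfold S; rw [Finset.sum_range_succ]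
  have h4 : (∑ j ∈ Finset.range (k+1), eps M t n ((i+1) + 2*(j:ℤ))) =
      S M t n (i+1) k + eps M t n ((i+1) + 2*((k:ℕ):ℤ)) := by
    unfold S; rw [Finset.sum_range_succ]
  have h5 : (i-1) + 2*((k+1:ℕ):ℤ) = (i+1) + 2*((k:ℕ):ℤ) := by push_cast; ring
  rw [h3, h4, h5]
  ring

end Core
section Main

variable (M : ℕ → ℤ → ℤ) (t : ℤ)
variable (ht : 0 ≤ t) (hM00 : M 0 0 = t) (hM0 : ∀ i : ℤ, i ≠ 0 → M 0 i = 0)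
  (hMrec : ∀ (n : ℕ) (i : ℤ), M (n+1) i = FF (M n (i-1)) + GG (M n (i+1)))

include ht hM00 hM0 hMrec

/-- any window sum dominates the full-cone line sum, given nonpositivity. -/
lemma S_compare (m : ℕ) (hU : ∀ x : ℤ, eps M t m x ≤ 0) (i : ℤ) (k : ℕ) :
    S M t m (-(m:ℤ)) (m+1) ≤ S M t m i k := by
  classical
  set f : ℤ → ℤ := fun x => eps M t m x with hf
  have hinj : ∀ (c : ℤ), Set.InjOn (fun j : ℕ => c + 2*(j:ℤ)) (Finset.range 1000000 : Finset ℕ) := by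
    intro c; intro x _ y _ hxy; simp only at hxy; omega
  set A : Finset ℤ := (Finset.range k).image (fun j : ℕ => i + 2*(j:ℤ)) with hA
  set B : Finset ℤ := (Finset.range (m+1)).image (fun j : ℕ => -(m:ℤ) + 2*(j:ℤ)) with hB
  have hSA : S M t m i k = ∑ x ∈ A, f x := by
    rw [hA, Finset.sum_image]
    · rfl
    · intro x _ y _ hxy; have h' : i + 2*(x:ℤ) = i + 2*(y:ℤ) := hxy; omega
  have hSB : S M t m (-(m:ℤ)) (m+1) = ∑ x ∈ B, f x := by
    rw [hB, Finset.sum_image]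
    · rfl
    · intro x _ y _ hxy; have h' : -(m:ℤ) + 2*(x:ℤ) = -(m:ℤ) + 2*(y:ℤ) := hxy; omega
  have hvan : ∀ x ∈ A, x ∉ B → f x = 0 := by
    intro x _ hxB
    apply eps_vanish M t ht hM00 hM0 hMrec m x
    by_contra hcon
    push_neg at hcon
    obtain ⟨hpar, hlo, hhi⟩ := hcon
    apply hxB
    rw [hB, Finset.mem_image]
    refine ⟨((x + m)/2).toNat, Finset.mem_range.mpr ?_, ?_⟩
    · omega
    · have : (( ((x + m)/2).toNat : ℤ)) = (x + m)/2 := by omega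
      rw [this]; omega
  have h1 : ∑ x ∈ A, f x = ∑ x ∈ A ∩ B, f x := by
    refine (Finset.sum_subset Finset.inter_subset_left ?_).symm
    intro x hxA hxAB
    exact hvan x hxA (fun hxB => hxAB (Finset.mem_inter.mpr ⟨hxA, hxB⟩))
  have h2 : ∑ x ∈ B, f x = ∑ x ∈ B ∩ A, f x + ∑ x ∈ B \ A, f x :=
    (Finset.sum_inter_add_sum_sdiff B A f).symm
  have h3 : ∑ x ∈ B \ A, f x ≤ 0 := Finset.sum_nonpos (fun x _ => hU x)
  have h4 : B ∩ A = A ∩ B := Finset.inter_comm B A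
  rw [hSA, hSB, h1, h2, h4]
  linarith

lemma main_induction : ∀ n : ℕ,
    (∀ i : ℤ, eps M t n i ≤ 0) ∧
    (∀ (i : ℤ) (k : ℕ), 2^n * Gnum n k ≤ 2 * S M t n i k) := by
  have hMnn := M_nonneg M t ht hM00 hM0 hMrec
  intro n
  induction n with
  | zero =>
    have heps0 : ∀ i : ℤ, eps M t 0 i = 0 := by
      intro i
      unfold eps
      by_cases h : i = 0
      · subst h; rw [hM00]; simp [cc]
      · rw [hM0 i h]; simp [cc, h]
    constructor
    · intro i; rw [heps0 i]
    · intro i k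
      have hS : S M t 0 i k = 0 := by
        unfold S; apply Finset.sum_eq_zero; intro j _; exact heps0 _
      have hG : Gnum 0 k = 0 := by
        unfold Gnum
        rcases Nat.eq_zero_or_pos k with h | h
        · subst h; norm_num
        · have h1 : min ((k:ℤ)) ((0:ℤ)+1) = 1 := by omega
          push_cast at h1 ⊢
          rw [h1]; ring
      rw [hS, hG]; norm_num
  | succ n ih =>
    obtain ⟨ihU, ihW⟩ := ih
    -- (a) nonpositivity at line n+1
    have hU' : ∀ i : ℤ, eps M t (n+1) i ≤ 0 := by
      intro i
      rw [eps_id M t ht hM00 hM0 hMrec n i]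
      have e1 := ihU (i-1)
      have e2 := ihU (i+1)
      have f1 : 2 * FF (M n (i-1)) - M n (i-1) ≤ 0 := by
        have := two_FF_le (hMnn n (i-1)); omega
      have g1 : 2 * GG (M n (i+1)) - M n (i+1) ≤ 0 := by
        have := two_GG_le (hMnn n (i+1)); omega
      have p1 : (0:ℤ) ≤ 2^n := by positivity
      nlinarith
    -- (b) the full-line bound at line n+1
    have hZ : 2^(n+1) * (-(((n:ℤ)+1) * ((n:ℤ)+2))) ≤ 2 * S M t (n+1) (-((n:ℤ)+1)) (n+2) := by
      -- line sums of M
      set MB : ℤ := ∑ j ∈ Finset.range (n+1), M n (-(n:ℤ) + 2*(j:ℤ)) with hMB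
      set MB' : ℤ := ∑ j ∈ Finset.range (n+2), M (n+1) (-((n:ℤ)+1) + 2*(j:ℤ)) with hMB'
      -- S as M-sum minus t * cc-sum
      have hSline : ∀ (m : ℕ) (c : ℤ) (k : ℕ), S M t m c k =
          2^m * (∑ j ∈ Finset.range k, M m (c + 2*(j:ℤ))) - t * (∑ j ∈ Finset.range k, cc m (c + 2*(j:ℤ))) := by
        intro m c k
        unfold S eps
        rw [Finset.mul_sum, Finset.mul_sum, ← Finset.sum_sub_distrib]
      have hccsum : (∑ j ∈ Finset.range (n+2), cc (n+1) (-((n:ℤ)+1) + 2*(j:ℤ))) = 2^(n+1) := by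
        have := cc_sum (n+1)
        have harg : ∀ j : ℕ, (-(((n+1:ℕ)):ℤ) + 2*(j:ℤ)) = (-((n:ℤ)+1) + 2*(j:ℤ)) := by
          intro j; push_cast; ring
        rw [← this]
        apply Finset.sum_congr rfl
        intro j _; rw [harg j]
      have hccsum2 : (∑ j ∈ Finset.range (n+1), cc n (-(n:ℤ) + 2*(j:ℤ))) = 2^n := cc_sum n
      -- MB lower bound from ihW
      have hMBlb : -((n:ℤ) * ((n:ℤ)+1)) ≤ 2 * MB - 2 * t := by
        have hw := ihW (-(n:ℤ)) (n+1)
        have hG : Gnum n (n+1) = -((n:ℤ) * ((n:ℤ)+1)) := by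
          unfold Gnum
          have : min (((n+1:ℕ)):ℤ) ((n:ℤ)+1) = (n:ℤ)+1 := by push_cast; omega
          rw [this]; ring
        rw [hG, hSline n (-(n:ℤ)) (n+1), hccsum2, ← hMB] at hw
        have hp : (0:ℤ) < 2^n := by positivity
        nlinarith
      -- MB' ≥ MB - (n+1)
      have hMB'lb : MB - ((n:ℤ)+1) ≤ MB' := by
        have hexp : MB' = (∑ j ∈ Finset.range (n+2), FF (M n (-((n:ℤ)+1) + 2*(j:ℤ) - 1)))
            + (∑ j ∈ Finset.range (n+2), GG (M n (-((n:ℤ)+1) + 2*(j:ℤ) + 1))) := by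
          rw [hMB', ← Finset.sum_add_distrib]
          apply Finset.sum_congr rfl
          intro j _
          exact hMrec n _
        have hFs : (∑ j ∈ Finset.range (n+2), FF (M n (-((n:ℤ)+1) + 2*(j:ℤ) - 1)))
            = ∑ j ∈ Finset.range (n+1), FF (M n (-(n:ℤ) + 2*(j:ℤ))) := by
          rw [Finset.sum_range_succ' (fun j => FF (M n (-((n:ℤ)+1) + 2*(j:ℤ) - 1))) (n+1)]
          have hz : M n (-((n:ℤ)+1) + 2*((0:ℕ):ℤ) - 1) = 0 :=
            M_out M t ht hM00 hM0 hMrec n _ (by push_cast; omega)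
          rw [hz]
          have : FF 0 = 0 := by simp [FF]
          rw [this, add_zero]
          apply Finset.sum_congr rfl
          intro j _
          congr 2
          push_cast; ring
        have hGs : (∑ j ∈ Finset.range (n+2), GG (M n (-((n:ℤ)+1) + 2*(j:ℤ) + 1)))
            = ∑ j ∈ Finset.range (n+1), GG (M n (-(n:ℤ) + 2*(j:ℤ))) := by
          rw [Finset.sum_range_succ (fun j => GG (M n (-((n:ℤ)+1) + 2*(j:ℤ) + 1))) (n+1)]
          have hz : M n (-((n:ℤ)+1) + 2*(((n+1:ℕ)):ℤ) + 1) = 0 :=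
            M_out M t ht hM00 hM0 hMrec n _ (by push_cast; omega)
          rw [hz]
          have : GG 0 = 0 := by simp [GG]
          rw [this, add_zero]
          apply Finset.sum_congr rfl
          intro j _
          congr 2
          push_cast; ring
        rw [hexp, hFs, hGs, ← Finset.sum_add_distrib, hMB]
        have : ∑ j ∈ Finset.range (n+1), (M n (-(n:ℤ) + 2*(j:ℤ)) - 1)
            ≤ ∑ j ∈ Finset.range (n+1), (FF (M n (-(n:ℤ) + 2*(j:ℤ))) + GG (M n (-(n:ℤ) + 2*(j:ℤ)))) := by
          apply Finset.sum_le_sum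
          intro j _
          exact FF_add_GG_ge (hMnn n _)
        rw [Finset.sum_sub_distrib] at this
        simp only [Finset.sum_const, Finset.card_range, nsmul_eq_mul, mul_one] at this
        push_cast at this ⊢
        linarith
      -- conclude
      rw [hSline (n+1) (-((n:ℤ)+1)) (n+2), hccsum, ← hMB']
      have hp : (0:ℤ) ≤ 2^(n+1) := by positivity
      nlinarith
    refine ⟨hU', ?_⟩
    intro i k
    rcases Nat.eq_zero_or_pos k with hk0 | hkpos
    · subst hk0
      have : S M t (n+1) i 0 = 0 := by unfold S; simp
      rw [this]
      have hg : Gnum (n+1) 0 = 0 := by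
        unfold Gnum
        have h0 : ((0:ℕ):ℤ) ⊓ ((((n+1:ℕ)):ℤ)+1) = 0 := by omega
        push_cast at h0 ⊢
        rw [h0]; ring
      rw [hg]; norm_num
    rcases le_or_gt k n with hkn | hkn
    · -- interior case 1 ≤ k ≤ n
      obtain ⟨k', rfl⟩ : ∃ k', k = k' + 1 := ⟨k - 1, by omega⟩
      have hdec := S_decomp M t ht hM00 hM0 hMrec n i k'
      -- bound the loss sums
      set FA : ℤ := ∑ j ∈ Finset.range (k'+1), (2 * FF (M n ((i-1) + 2*(j:ℤ))) - M n ((i-1) + 2*(j:ℤ))) with hFA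
      set GB : ℤ := ∑ j ∈ Finset.range (k'+1), (2 * GG (M n ((i+1) + 2*(j:ℤ))) - M n ((i+1) + 2*(j:ℤ))) with hGB
      have hloss : -(2*((k':ℤ)+1) + 1) ≤ FA + GB := by
        have hFA' : FA = (2 * FF (M n (i-1)) - M n (i-1))
            + ∑ j ∈ Finset.range k', (2 * FF (M n ((i+1) + 2*(j:ℤ))) - M n ((i+1) + 2*(j:ℤ))) := by
          rw [hFA, Finset.sum_range_succ' (fun j => (2 * FF (M n ((i-1) + 2*(j:ℤ))) - M n ((i-1) + 2*(j:ℤ)))) k']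
          have h0 : (i-1) + 2*((0:ℕ):ℤ) = i - 1 := by push_cast; ring
          rw [h0]
          have hsh : ∀ j : ℕ, (i-1) + 2*(((j+1:ℕ)):ℤ) = (i+1) + 2*(j:ℤ) := by
            intro j; push_cast; ring
          have : (∑ j ∈ Finset.range k', (2 * FF (M n ((i-1) + 2*(((j+1:ℕ)):ℤ))) - M n ((i-1) + 2*(((j+1:ℕ)):ℤ))))
              = ∑ j ∈ Finset.range k', (2 * FF (M n ((i+1) + 2*(j:ℤ))) - M n ((i+1) + 2*(j:ℤ))) := by
            apply Finset.sum_congr rfl; intro j _; rw [hsh j]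
          rw [this]; ring
        have hGB' : GB = (∑ j ∈ Finset.range k', (2 * GG (M n ((i+1) + 2*(j:ℤ))) - M n ((i+1) + 2*(j:ℤ))))
            + (2 * GG (M n ((i+1) + 2*((k':ℕ):ℤ))) - M n ((i+1) + 2*((k':ℕ):ℤ))) := by
          rw [hGB, Finset.sum_range_succ]
        have hmid : ∑ j ∈ Finset.range k', ((2 * FF (M n ((i+1) + 2*(j:ℤ))) - M n ((i+1) + 2*(j:ℤ)))
            + (2 * GG (M n ((i+1) + 2*(j:ℤ))) - M n ((i+1) + 2*(j:ℤ)))) ≥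
            ∑ j ∈ Finset.range k', (-2 : ℤ) := by
          apply Finset.sum_le_sum
          intro j _
          have := FF_add_GG_ge (hMnn n ((i+1) + 2*(j:ℤ)))
          omega
        simp only [Finset.sum_const, Finset.card_range, nsmul_eq_mul, mul_neg] at hmid
        rw [Finset.sum_add_distrib] at hmid
        have hend1 : -1 ≤ 2 * FF (M n (i-1)) - M n (i-1) := by
          have := two_FF_ge (hMnn n (i-1)); omega
        have hend2 : -2 ≤ 2 * GG (M n ((i+1) + 2*((k':ℕ):ℤ))) - M n ((i+1) + 2*((k':ℕ):ℤ)) := by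
          have := two_GG_ge (hMnn n ((i+1) + 2*((k':ℕ):ℤ))); omega
        rw [hFA', hGB']
        push_cast
        push_cast at hmid
        linarith
      -- apply induction hypothesis to both windows
      have hw1 := ihW (i-1) (k'+2)
      have hw2 := ihW (i+1) k'
      -- Gnum arithmetic
      have hGid : 2^n * Gnum n (k'+2) + 2^n * Gnum n k' + 2^(n+1) * (-(2*((k':ℤ)+1) + 1))
          = 2^(n+1) * Gnum (n+1) (k'+1) := by
        unfold Gnum
        have m1 : min (((k'+2:ℕ)):ℤ) ((n:ℤ)+1) = ((k':ℤ)+2) := by push_cast; omega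
        have m2 : min ((k':ℕ):ℤ) ((n:ℤ)+1) = (k':ℤ) := by push_cast; omega
        have m3 : min (((k'+1:ℕ)):ℤ) ((((n+1:ℕ)):ℤ)+1) = ((k':ℤ)+1) := by push_cast; omega
        push_cast
        push_cast at m1 m2 m3
        rw [m1, m2, m3]
        ring
      have hp : (0:ℤ) ≤ 2^n := by positivity
      have h2n1 : (2:ℤ)^(n+1) = 2 * 2^n := by ring
      calc 2^(n+1) * Gnum (n+1) (k'+1)
          = 2^n * Gnum n (k'+2) + 2^n * Gnum n k' + 2^(n+1) * (-(2*((k':ℤ)+1) + 1)) := hGid.symm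
        _ ≤ 2 * S M t n (i-1) (k'+2) + 2 * S M t n (i+1) k' + 2^(n+1) * (FA + GB) := by
            have : 2^(n+1) * (-(2*((k':ℤ)+1) + 1)) ≤ 2^(n+1) * (FA + GB) := by
              apply mul_le_mul_of_nonneg_left hloss (by positivity)
            linarith
        _ = 2 * S M t (n+1) i (k'+1) := by rw [hdec]; ring
    · -- case k ≥ n+1 : use full-line bound
      have hGv : Gnum (n+1) k = -(((n:ℤ)+1) * ((n:ℤ)+2)) := by
        unfold Gnum
        rcases le_or_gt (n+2) k with h | h
        · have : min ((k:ℕ):ℤ) ((((n+1:ℕ)):ℤ)+1) = ((n:ℤ)+2) := by push_cast; omega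
          push_cast at this ⊢
          rw [this]; ring
        · have hk : k = n+1 := by omega
          subst hk
          have : min (((n+1:ℕ)):ℤ) ((((n+1:ℕ)):ℤ)+1) = ((n:ℤ)+1) := by push_cast; omega
          push_cast at this ⊢
          rw [this]; ring
      rw [hGv]
      have hcomp := S_compare M t ht hM00 hM0 hMrec (n+1) hU' i k
      have harg : (-(((n+1:ℕ)):ℤ)) = (-((n:ℤ)+1)) := by push_cast; ring
      rw [harg] at hcomp
      linarith
end Main
lemma site_bound (N : ℕ → ℕ → ℤ → ℤ)
    (h00 : ∀ t : ℕ, N t 0 0 = t)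
    (h0 : ∀ (t : ℕ) (i : ℤ), i ≠ 0 → N t 0 i = 0)
    (hrec : ∀ (t : ℕ) (n : ℕ) (i : ℤ), N t (n + 1) i =
      (if N t n (i - 1) = 0 then 0 else ⌈((N t n (i - 1) : ℚ) - 1) / 2⌉) +
      (if N t n (i + 1) = 0 then 0 else ⌊((N t n (i + 1) : ℚ) - 1) / 2⌋))
    (n : ℕ) (i : ℤ) (hpar : i % 2 = (n : ℤ) % 2) (hle : |i| ≤ (n : ℤ)) (t : ℕ) :
    |(N t n i : ℚ) - (t : ℚ) * (n.choose ((i + n).toNat / 2) : ℚ) / 2 ^ n| ≤ n := by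
  have hMrec : ∀ (m : ℕ) (j : ℤ), N t (m+1) j = FF (N t m (j-1)) + GG (N t m (j+1)) := by
    intro m j
    rw [hrec t m j]
    rfl
  have ht : (0:ℤ) ≤ (t:ℤ) := by positivity
  obtain ⟨hU, hW⟩ := main_induction (N t) (t:ℤ) ht (h00 t) (h0 t) hMrec n
  -- pointwise bounds in ℤ
  have hupper : eps (N t) (t:ℤ) n i ≤ 0 := hU i
  have hlower : -((n:ℤ) * 2^n) ≤ eps (N t) (t:ℤ) n i := by
    have hw := hW i 1
    have hG : Gnum n 1 = -(2 * (n:ℤ)) := by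
      unfold Gnum
      have h1 : min ((1:ℕ):ℤ) ((n:ℤ)+1) = 1 := by omega
      push_cast at h1 ⊢
      rw [h1]; ring
    have hS1 : S (N t) (t:ℤ) n i 1 = eps (N t) (t:ℤ) n i := by
      unfold S
      rw [Finset.sum_range_one]
      congr 1
      push_cast; ring
    rw [hG, hS1] at hw
    nlinarith [hw]
  -- identify cc with choose
  have hcc : cc n i = (n.choose ((i + n).toNat / 2) : ℤ) :=
    cc_eq_choose n i (by rw [abs_le] at hle; omega) (by rw [abs_le] at hle; omega) (by omega)
  have heps : eps (N t) (t:ℤ) n i = 2^n * N t n i - (t:ℤ) * (n.choose ((i + n).toNat / 2) : ℤ) := by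
    unfold eps; rw [hcc]
  rw [heps] at hupper hlower
  -- transfer to ℚ
  have hq : (N t n i : ℚ) - (t : ℚ) * (n.choose ((i + n).toNat / 2) : ℚ) / 2 ^ n
      = ((2^n * N t n i - (t:ℤ) * (n.choose ((i + n).toNat / 2) : ℤ) : ℤ) : ℚ) / 2^n := by
    have hpow : ((2:ℚ))^n ≠ 0 := by positivity
    field_simp
    push_cast
    ring
  rw [hq, abs_le]
  have hpow : (0:ℚ) < (2:ℚ)^n := by positivity
  constructor
  · rw [le_div_iff₀ hpow]
    have : ((-((n:ℤ) * 2^n) : ℤ) : ℚ) ≤ ((2^n * N t n i - (t:ℤ) * (n.choose ((i + n).toNat / 2) : ℤ) : ℤ) : ℚ) := by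
      exact_mod_cast hlower
    push_cast at this ⊢
    linarith
  · rw [div_le_iff₀ hpow]
    have : ((2^n * N t n i - (t:ℤ) * (n.choose ((i + n).toNat / 2) : ℤ) : ℤ) : ℚ) ≤ 0 := by
      exact_mod_cast hupper
    push_cast at this ⊢
    nlinarith [this, hpow]

end Stmt12

/-- Quantitative convergence of the Abelian RR2 to the binomial model: at every
site of the light cone with the right parity, the Abelian count differs from
`t·(n choose (i+n)/2)/2^n` by at most `n`, hence `N_t(n,i)/t → (n choose (i+n)/2)/2^n`. -/
theorem stmt_12
    (N : ℕ → ℕ → ℤ → ℤ)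
    (h00 : ∀ t : ℕ, N t 0 0 = t)
    (h0 : ∀ (t : ℕ) (i : ℤ), i ≠ 0 → N t 0 i = 0)
    (hrec : ∀ (t : ℕ) (n : ℕ) (i : ℤ), N t (n + 1) i =
      (if N t n (i - 1) = 0 then 0 else ⌈((N t n (i - 1) : ℚ) - 1) / 2⌉) +
      (if N t n (i + 1) = 0 then 0 else ⌊((N t n (i + 1) : ℚ) - 1) / 2⌋)) :
    ∀ (n : ℕ) (i : ℤ), i % 2 = (n : ℤ) % 2 → |i| ≤ (n : ℤ) →
      (∀ t : ℕ,
        |(N t n i : ℚ) - (t : ℚ) * (n.choose ((i + n).toNat / 2) : ℚ) / 2 ^ n| ≤ n) ∧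
      Tendsto (fun t : ℕ => (N t n i : ℚ) / t) atTop
        (nhds ((n.choose ((i + n).toNat / 2) : ℚ) / 2 ^ n)) := by
  intro n i hpar hle
  have hbound := fun t => Stmt12.site_bound N h00 h0 hrec n i hpar hle t
  refine ⟨hbound, ?_⟩
  set c : ℚ := (n.choose ((i + n).toNat / 2) : ℚ) / 2 ^ n with hc
  rw [Metric.tendsto_atTop]
  intro ε hε
  obtain ⟨T, hT⟩ := exists_nat_gt ((n:ℝ) / ε)
  refine ⟨T + 1, fun t htT => ?_⟩
  have htpos : (0:ℚ) < (t:ℚ) := by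
    have h1 : (0:ℕ) < t := by omega
    exact_mod_cast h1
  have hdist : dist ((N t n i : ℚ) / t) c = ((|(N t n i : ℚ) / t - c| : ℚ) : ℝ) := by
    rw [Rat.dist_eq]
    push_cast
    ring
  rw [hdist]
  -- the ℚ bound
  have hnum : |(N t n i : ℚ) - t * c| ≤ n := by
    have hb := hbound t
    rw [hc]
    have harg : (t:ℚ) * ((n.choose ((i + n).toNat / 2) : ℚ) / 2 ^ n)
        = (t : ℚ) * (n.choose ((i + n).toNat / 2) : ℚ) / 2 ^ n := by ring
    rw [harg]
    exact hb
  have hsplit : (N t n i : ℚ) / t - c = ((N t n i : ℚ) - t * c) / t := by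
    field_simp
  have hstep : |(N t n i : ℚ) / t - c| ≤ (n:ℚ) / t := by
    rw [hsplit, abs_div, abs_of_pos htpos]
    exact (div_le_div_iff_of_pos_right htpos).mpr hnum
  have hcast : ((|(N t n i : ℚ) / t - c| : ℚ) : ℝ) ≤ (n:ℝ) / (t:ℝ) := by
    have := (Rat.cast_le (K := ℝ)).mpr hstep
    rw [Rat.cast_div] at this
    push_cast at this ⊢
    exact this
  have htR : (0:ℝ) < (t:ℝ) := by
    have h1 : (0:ℕ) < t := by omega
    exact_mod_cast h1
  calc ((|(N t n i : ℚ) / t - c| : ℚ) : ℝ) ≤ (n:ℝ) / (t:ℝ) := hcast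
    _ < ε := by
      rw [div_lt_iff₀ htR]
      have h2 : (T:ℝ) + 1 ≤ t := by exact_mod_cast htT
      rw [div_lt_iff₀ hε] at hT
      nlinarith
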